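/- Let h₁, h₂ be dual quaternions with h₁ conj(h₁) = h₂ conj(h₂) = 1 and h₁ + conj(h₁) = h₂ + conj(h₂) = 0 (normalized half-turns). Then for all parameters t₁, t₂, the product R(t₁,t₂) = (t₁ − h₁)(t₂ − h₂) satisfies: the dual part of R conj(R) is zero, i.e. R(t₁,t₂) lies on the Study quadric. -/

import Mathlib

noncomputable section
open Quaternion DualNumber TrivSqZeroExt

/-- The dual quaternions: quaternions with dual-number coefficients. -/
abbrev DQ := Quaternion (DualNumber ℝ)

/-- The dual quaternion `p + ε d` with primal part `p` and dual part `d`. -/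
def toDQ (p d : Quaternion ℝ) : DQ :=
  Quaternion.dualNumberEquiv.symm (⟨p, d⟩ : DualNumber (Quaternion ℝ))

/- Auxiliary DQ-specific algebra lemmas (to avoid instance-path mismatches
when rewriting with fully generic lemmas). -/

lemma dq_star_mul (x y : DQ) : star (x * y) = star y * star x := by
  ext <;> simp <;> ring

lemma dq_star_sub (x y : DQ) : star (x - y) = star x - star y := by
  ext <;> simp <;> ring

lemma dq_star_algebraMap (t : ℝ) : star ((algebraMap ℝ DQ : ℝ →+* DQ) t) = (algebraMap ℝ DQ : ℝ →+* DQ) t :=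
  Quaternion.star_coe (algebraMap ℝ (DualNumber ℝ) t)

lemma dq_sub_neg (x y : DQ) : x - -y = x + y := sub_neg_eq_add x y

lemma dq_mul_neg (x y : DQ) : x * -y = -(x * y) := by
  ext <;> simp <;> ring

lemma dq_mul_assoc (x y z : DQ) : x * y * z = x * (y * z) := mul_assoc x y z

lemma dq_neg_neg (x : DQ) : - -x = x := by ext <;> simp

set_option maxHeartbeats 1000000 in
lemma dq_expand (x h : DQ) : (x - h) * (x + h) = x * x + (x * h - h * x) - h * h := by
  ext <;> simp <;> ring

lemma dq_algebraMap_mul (s t : ℝ) :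
    (algebraMap ℝ DQ : ℝ →+* DQ) (s * t) = (algebraMap ℝ DQ : ℝ →+* DQ) s * (algebraMap ℝ DQ : ℝ →+* DQ) t := map_mul _ s t

lemma dq_algebraMap_add (s t : ℝ) :
    (algebraMap ℝ DQ : ℝ →+* DQ) (s + t) = (algebraMap ℝ DQ : ℝ →+* DQ) s + (algebraMap ℝ DQ : ℝ →+* DQ) t := map_add _ s t

lemma dq_algebraMap_one : (algebraMap ℝ DQ : ℝ →+* DQ) 1 = 1 := map_one _

lemma dq_commutes (t : ℝ) (x : DQ) :
    (algebraMap ℝ DQ : ℝ →+* DQ) t * x = x * (algebraMap ℝ DQ : ℝ →+* DQ) t := Algebra.commutes t x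

/-- For normalized half-turns h₁, h₂, every product R(t₁,t₂) = (t₁−h₁)(t₂−h₂)
has real norm, i.e. lies on the Study quadric. -/
theorem twoR_dyad_on_study_quadric (h₁ h₂ : DQ)
    (h₁n : h₁ * star h₁ = 1) (h₂n : h₂ * star h₂ = 1)
    (h₁h : h₁ + star h₁ = 0) (h₂h : h₂ + star h₂ = 0) :
    ∀ t₁ t₂ : ℝ, ∃ a : ℝ,
      (((algebraMap ℝ DQ : ℝ →+* DQ) t₁ - h₁) * ((algebraMap ℝ DQ : ℝ →+* DQ) t₂ - h₂)) *
        star (((algebraMap ℝ DQ : ℝ →+* DQ) t₁ - h₁) * ((algebraMap ℝ DQ : ℝ →+* DQ) t₂ - h₂)) =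
      (algebraMap ℝ DQ : ℝ →+* DQ) a := by
  intro t₁ t₂
  have e₁ : star h₁ = -h₁ := eq_neg_of_add_eq_zero_right h₁h
  have e₂ : star h₂ = -h₂ := eq_neg_of_add_eq_zero_right h₂h
  have sq₁ : h₁ * h₁ = -1 := by
    rw [e₁, dq_mul_neg] at h₁n
    calc h₁ * h₁ = - -(h₁ * h₁) := (dq_neg_neg _).symm
      _ = -1 := by rw [h₁n]
  have sq₂ : h₂ * h₂ = -1 := by
    rw [e₂, dq_mul_neg] at h₂n
    calc h₂ * h₂ = - -(h₂ * h₂) := (dq_neg_neg _).symm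
      _ = -1 := by rw [h₂n]
  refine ⟨(t₁ * t₁ + 1) * (t₂ * t₂ + 1), ?_⟩
  have hstar : star (((algebraMap ℝ DQ : ℝ →+* DQ) t₁ - h₁) * ((algebraMap ℝ DQ : ℝ →+* DQ) t₂ - h₂)) =
      ((algebraMap ℝ DQ : ℝ →+* DQ) t₂ + h₂) * ((algebraMap ℝ DQ : ℝ →+* DQ) t₁ + h₁) := by
    rw [dq_star_mul, dq_star_sub, dq_star_sub, dq_star_algebraMap, dq_star_algebraMap,
      e₁, e₂, dq_sub_neg, dq_sub_neg]
  rw [hstar]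
  have mid : ((algebraMap ℝ DQ : ℝ →+* DQ) t₂ - h₂) * ((algebraMap ℝ DQ : ℝ →+* DQ) t₂ + h₂) =
      (algebraMap ℝ DQ : ℝ →+* DQ) (t₂ * t₂ + 1) := by
    rw [dq_expand, dq_commutes t₂ h₂, sub_self, add_zero, sq₂, dq_sub_neg,
      dq_algebraMap_add, dq_algebraMap_mul, dq_algebraMap_one]
  have outer : ((algebraMap ℝ DQ : ℝ →+* DQ) t₁ - h₁) * ((algebraMap ℝ DQ : ℝ →+* DQ) t₁ + h₁) =
      (algebraMap ℝ DQ : ℝ →+* DQ) (t₁ * t₁ + 1) := by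
    rw [dq_expand, dq_commutes t₁ h₁, sub_self, add_zero, sq₁, dq_sub_neg,
      dq_algebraMap_add, dq_algebraMap_mul, dq_algebraMap_one]
  calc ((algebraMap ℝ DQ : ℝ →+* DQ) t₁ - h₁) * ((algebraMap ℝ DQ : ℝ →+* DQ) t₂ - h₂) *
        (((algebraMap ℝ DQ : ℝ →+* DQ) t₂ + h₂) * ((algebraMap ℝ DQ : ℝ →+* DQ) t₁ + h₁))
      = ((algebraMap ℝ DQ : ℝ →+* DQ) t₁ - h₁) * (((algebraMap ℝ DQ : ℝ →+* DQ) t₂ - h₂) * ((algebraMap ℝ DQ : ℝ →+* DQ) t₂ + h₂) *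
          ((algebraMap ℝ DQ : ℝ →+* DQ) t₁ + h₁)) := by
        rw [dq_mul_assoc, dq_mul_assoc]
    _ = ((algebraMap ℝ DQ : ℝ →+* DQ) t₁ - h₁) *
          ((algebraMap ℝ DQ : ℝ →+* DQ) (t₂ * t₂ + 1) * ((algebraMap ℝ DQ : ℝ →+* DQ) t₁ + h₁)) := by rw [mid]
    _ = ((algebraMap ℝ DQ : ℝ →+* DQ) t₁ - h₁) *
          (((algebraMap ℝ DQ : ℝ →+* DQ) t₁ + h₁) * (algebraMap ℝ DQ : ℝ →+* DQ) (t₂ * t₂ + 1)) := by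
        rw [dq_commutes (t₂ * t₂ + 1)]
    _ = ((algebraMap ℝ DQ : ℝ →+* DQ) t₁ - h₁) * ((algebraMap ℝ DQ : ℝ →+* DQ) t₁ + h₁) *
          (algebraMap ℝ DQ : ℝ →+* DQ) (t₂ * t₂ + 1) := by rw [dq_mul_assoc]
    _ = (algebraMap ℝ DQ : ℝ →+* DQ) (t₁ * t₁ + 1) * (algebraMap ℝ DQ : ℝ →+* DQ) (t₂ * t₂ + 1) := by rw [outer]
    _ = (algebraMap ℝ DQ : ℝ →+* DQ) ((t₁ * t₁ + 1) * (t₂ * t₂ + 1)) := (dq_algebraMap_mul _ _).symm
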